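/- Let (P, ≼) be a finite poset and let A be the collection of all antichains of P, partially ordered by: α ≼ α' whenever for each element x of α there exists an element x' of α' with x ≼ x'. Then (A, ≼) contains a chain with exactly |P| + 1 elements. -/

import Mathlib

/-- sharpness in Lemma 2 of the paper.
Let `(P, ≤)` be a finite poset and order the antichains of `P` by
`α ≼ α' ↔ ∀ x ∈ α, ∃ x' ∈ α', x ≤ x'`. Then there is a chain of antichains in this
order with exactly `|P| + 1` elements. -/
theorem stmt12 {P : Type*} [PartialOrder P] [Fintype P] :
    ∃ C : Finset (Set P),
      (∀ α ∈ C, IsAntichain (· ≤ ·) α) ∧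
      IsChain (fun α α' : Set P => ∀ x ∈ α, ∃ x' ∈ α', x ≤ x') ↑C ∧
      C.card = Fintype.card P + 1 := by
  classical
  set n := Fintype.card P with hn
  letI : Fintype (LinearExtension P) := ‹Fintype P›
  have hcard : Fintype.card (LinearExtension P) = n := rfl
  let f : Fin n ≃o LinearExtension P := monoEquivOfFin _ hcard
  let idx : P → ℕ := fun x => (f.symm (toLinearExtension x)).val
  have hinjL : Function.Injective (toLinearExtension : P → LinearExtension P) :=
    fun a b h => h
  have hidx_inj : Function.Injective idx := by
    intro a b h
    exact hinjL (f.symm.injective (Fin.val_injective h))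
  have hidx_mono : ∀ a b : P, a ≤ b → idx a ≤ idx b := by
    intro a b h
    exact f.symm.monotone (toLinearExtension.monotone h)
  have hidx_lt : ∀ x : P, idx x < n := fun x => (f.symm (toLinearExtension x)).2
  have hidx_surj : ∀ m, m < n → ∃ x : P, idx x = m := by
    intro m hm
    refine ⟨(f ⟨m, hm⟩ : LinearExtension P), ?_⟩
    exact congrArg Fin.val (f.symm_apply_apply ⟨m, hm⟩)
  -- the antichains
  let A : ℕ → Set P := fun k => {x | idx x < k ∧ ∀ y, idx y < k → x ≤ y → x = y}
  have hanti : ∀ k, IsAntichain (· ≤ ·) (A k) := by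
    intro k x hx y hy hne hle
    exact hne (hx.2 y hy.1 hle)
  have hstep : ∀ k l, k ≤ l → ∀ x ∈ A k, ∃ x' ∈ A l, x ≤ x' := by
    intro k l hkl x hx
    have hT : (Finset.univ.filter (fun y : P => idx y < l ∧ x ≤ y)).Nonempty :=
      ⟨x, by simp [lt_of_lt_of_le hx.1 hkl]⟩
    obtain ⟨a, ha, hmax⟩ : ∃ a ∈ Finset.univ.filter (fun y : P => idx y < l ∧ x ≤ y),
        ∀ y ∈ Finset.univ.filter (fun y : P => idx y < l ∧ x ≤ y), ¬ a < y := by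
      obtain ⟨a, h⟩ := Finset.exists_maximal hT
      exact ⟨a, h.1, fun y hy hlt => lt_irrefl a (lt_of_lt_of_le hlt (h.2 hy hlt.le))⟩
    simp only [Finset.mem_filter, Finset.mem_univ, true_and] at ha
    refine ⟨a, ⟨ha.1, ?_⟩, ha.2⟩
    intro y hy hay
    by_contra hne
    exact hmax y (by simp [hy, le_trans ha.2 hay]) (lt_of_le_of_ne hay hne)
  have hne : ∀ k l, k < l → l ≤ n → A k ≠ A l := by
    intro k l hkl hln hEq
    obtain ⟨x, hx⟩ := hidx_surj (l - 1) (by omega)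
    have hxl : x ∈ A l := by
      refine ⟨by omega, ?_⟩
      intro y hy hxy
      have := hidx_mono x y hxy
      exact hidx_inj (by omega)
    have hxk : x ∉ A k := fun h => by have := h.1; omega
    rw [hEq] at hxk
    exact hxk hxl
  refine ⟨(Finset.range (n + 1)).image A, ?_, ?_, ?_⟩
  · intro α hα
    simp only [Finset.mem_image, Finset.mem_range] at hα
    obtain ⟨k, _, rfl⟩ := hα
    exact hanti k
  · intro α hα β hβ hne'
    simp only [Finset.coe_image, Finset.coe_range, Set.mem_image, Set.mem_Iio] at hα hβ
    obtain ⟨k, hk, rfl⟩ := hα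
    obtain ⟨l, hl, rfl⟩ := hβ
    rcases le_total k l with h | h
    · exact Or.inl (hstep k l h)
    · exact Or.inr (hstep l k h)
  · rw [Finset.card_image_of_injOn, Finset.card_range]
    intro k hk l hl hEq
    simp only [Finset.coe_range, Set.mem_Iio] at hk hl
    by_contra hne'
    rcases lt_or_gt_of_ne hne' with h | h
    · exact hne k l h (by omega) hEq
    · exact hne l k h (by omega) hEq.symm
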